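/- Let F be a field and X a sequence of m+n pairwise distinct elements of F. For any partitions μ and ν with l(μ) ≤ m and l(ν) ≤ n, s_{μ ⋆_{m,n} ν}(X) = Σ_{S,T} ε_{m,n}(μ, ν) · s_μ(S) · s_ν(T) / Δ(S; T), where the sum ranges over all decompositions of X into complementary subsequences S of length m and T of length n (i.e., S = X_I and T = X_{I^c} for an m-element subset I of the index set); when μ ⋆_{m,n} ν = ∞ the left-hand side is 0 and the sign is 1. -/

import Mathlib

open scoped Classical

/-- `f : ℕ → ℕ` represents a partition via its parts `f 1 ≥ f 2 ≥ ⋯`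
(indices start at `1`; we normalize the unused value at `0` by `f 0 = f 1`). -/
def IsPartition (f : ℕ → ℕ) : Prop :=
  f 0 = f 1 ∧ (∀ i j, i ≤ j → f j ≤ f i) ∧ ∃ N, ∀ i, N ≤ i → f i = 0

/-- the partition `f` has length (number of positive parts) at most `r`,
i.e. `l(f) ≤ r`. -/
def LenLE (f : ℕ → ℕ) (r : ℕ) : Prop := ∀ i, r < i → f i = 0

/-- two partitions have the same parts. -/
def EqParts (f g : ℕ → ℕ) : Prop := ∀ i, 1 ≤ i → f i = g i

/-- normalize the value at the (unused) index `0`. -/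
def pad (f : ℕ → ℕ) : ℕ → ℕ := fun i => if i = 0 then f 1 else f i

/-- the multiset `{f i + N - i : i = 1, …, N}`. -/
def hooks (N : ℕ) (f : ℕ → ℕ) : Multiset ℕ :=
  (Multiset.range N).map (fun i => f (i + 1) + N - (i + 1))

/-- `lam` is the `(m,n)`-overlap of `mu` and `nu`, i.e. `mu ⋆_{m,n} nu = lam`:
`lam` is a partition of length at most `m + n` such that the sequence
`(lam i + (m+n) - i)_{i=1..m+n}` is a rearrangement of the concatenation of
`(mu i + m - i)_{i=1..m}` and `(nu j + n - j)_{j=1..n}`. -/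
def IsOverlap (m n : ℕ) (mu nu lam : ℕ → ℕ) : Prop :=
  LenLE lam (m + n) ∧ hooks (m + n) lam = hooks m mu + hooks n nu

/-- `mu ⋆_{m,n} nu = ∞`: the two hook sequences share a common value. -/
def OverlapInfinite (m n : ℕ) (mu nu : ℕ → ℕ) : Prop :=
  ∃ a, a ∈ hooks m mu ∧ a ∈ hooks n nu

/-- the sign `ε_{m,n}(mu, nu)` of the permutation sorting the concatenation of
`(mu i + m - i)_{i=1..m}` and `(nu j + n - j)_{j=1..n}` into strictly decreasing
order, computed as `(-1)` to the number of inversions. -/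
def overlapSign (m n : ℕ) (mu nu : ℕ → ℕ) : ℤ :=
  (-1) ^ (((Finset.range m ×ˢ Finset.range n).filter (fun p =>
    mu (p.1 + 1) + m - (p.1 + 1) < nu (p.2 + 1) + n - (p.2 + 1))).card)

/-- the truncation `(f_1, …, f_r)` of a partition. -/
def truncateP (f : ℕ → ℕ) (r : ℕ) : ℕ → ℕ := pad fun i => if i ≤ r then f i else 0

/-- `μ + ⟨k^l⟩ = (μ_1 + k, …, μ_l + k)`. -/
def addRect (mu : ℕ → ℕ) (k l : ℕ) : ℕ → ℕ := pad fun i => if i ≤ l then mu i + k else 0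

/-- `μ − ⟨k^l⟩ = (μ_1 − k, …, μ_l − k)`. -/
def subRect (mu : ℕ → ℕ) (k l : ℕ) : ℕ → ℕ := pad fun i => if i ≤ l then mu i - k else 0

/-- `ν ∪ a`: `ν` regarded as a sequence of length `r`, with the sequence `a`
appended after position `r`. -/
def concatSeq (nu : ℕ → ℕ) (r : ℕ) (tail : ℕ → ℕ) : ℕ → ℕ :=
  pad fun i => if i ≤ r then nu i else tail (i - r)

/-- the rectangular partition `⟨a^b⟩` (with `b` parts equal to `a`). -/
def rectP (a b : ℕ) : ℕ → ℕ := pad fun i => if i ≤ b then a else 0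

/-- the `(m,n)`-complement `λ̃ = (m − λ_n, …, m − λ_1)` of a partition `λ ⊂ ⟨m^n⟩`. -/
def complSeq (m n : ℕ) (lam : ℕ → ℕ) : ℕ → ℕ :=
  pad fun i => if i ≤ n then m - lam (n + 1 - i) else 0

noncomputable section

/-- the `i`-th part `λ'_i = #{j ≥ 1 : λ_j ≥ i}` of the conjugate partition. -/
def conjPart (f : ℕ → ℕ) (i : ℕ) : ℕ := {j : ℕ | 1 ≤ j ∧ i ≤ f j}.ncard

/-- the conjugate partition `λ'`. -/
def conjP (f : ℕ → ℕ) : ℕ → ℕ := pad fun i => conjPart f i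

/-- the set of integers `k ≤ min{m,n}` with `λ_{n+1−k} ≤ m − k`. -/
def indexSet (m n : ℕ) (lam : ℕ → ℕ) : Set ℤ :=
  {k : ℤ | k ≤ min (m : ℤ) (n : ℤ) ∧ (lam ((n : ℤ) + 1 - k).toNat : ℤ) ≤ (m : ℤ) - k}

/-- `k` is the `(m,n)`-index of `lam`: the largest integer `k ≤ min{m,n}`
with `λ_{n+1−k} ≤ m − k`. -/
def IsIndex (m n : ℕ) (lam : ℕ → ℕ) (k : ℤ) : Prop := IsGreatest (indexSet m n lam) k

/-- the `(m,n)`-index of `lam`. -/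
def indexOf (m n : ℕ) (lam : ℕ → ℕ) : ℤ := sSup (indexSet m n lam)

variable {F : Type*} [Field F]

/-- `Δ(X) = ∏_{i<j} (X_i − X_j)`. -/
def vanDet {n : ℕ} (X : Fin n → F) : F :=
  ∏ i : Fin n, ∏ j : Fin n, if i < j then X i - X j else 1

/-- `Δ(X; Y) = ∏_{x ∈ X, y ∈ Y} (x − y)`. -/
def vanPair {n m : ℕ} (X : Fin n → F) (Y : Fin m → F) : F :=
  ∏ i, ∏ j, (X i - Y j)

/-- the Schur function `s_λ(X)`. -/
def schur {n : ℕ} (lam : ℕ → ℕ) (X : Fin n → F) : F :=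
  if LenLE lam n then
    (Matrix.of fun i j : Fin n =>
      X i ^ (lam ((j : ℕ) + 1) + n - ((j : ℕ) + 1))).det / vanDet X
  else 0

/-- the subsequence of `X` indexed by `I` (in increasing order of indices). -/
def subSeq {n : ℕ} (X : Fin n → F) (I : Finset (Fin n)) : Fin I.card → F :=
  fun j => X (I.orderIsoOfFin rfl j).1

/-- the sign `ε(λ) = (−1)^{λ_1+⋯+λ_{n−k}} (−1)^{mk} (−1)^{k(k−1)/2}` from the
determinantal formula. -/
def LSsign (m n k : ℕ) (lam : ℕ → ℕ) : ℤ :=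
  (-1) ^ (∑ i ∈ Finset.range (n - k), lam (i + 1)) * (-1) ^ (m * k) *
    (-1) ^ (k * (k - 1) / 2)

/-- the Moens–Van der Jeugt block matrix. -/
def LSmat (k : ℕ) {n m : ℕ} (lam : ℕ → ℕ) (X : Fin n → F) (Y : Fin m → F) :
    Matrix (Fin (n + (m - k))) (Fin (n + (m - k))) F :=
  Matrix.of fun r c =>
    if hr : (r : ℕ) < n then
      if hc : (c : ℕ) < m then (X ⟨(r : ℕ), hr⟩ - Y ⟨(c : ℕ), hc⟩)⁻¹
      else X ⟨(r : ℕ), hr⟩ ^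
        ((lam ((c : ℕ) - m + 1) : ℤ) + (n : ℤ) - (m : ℤ) - (((c : ℕ) - m + 1 : ℕ) : ℤ))
    else
      if hc : (c : ℕ) < m then
        Y ⟨(c : ℕ), hc⟩ ^
          ((conjPart lam ((r : ℕ) - n + 1) : ℤ) + (m : ℤ) - (n : ℤ) - (((r : ℕ) - n + 1 : ℕ) : ℤ))
      else 0

/-- the Littlewood–Schur function `LS_λ(−X; Y)`, defined by the determinantal
formula of Moens and Van der Jeugt: it is `0` if the `(m,n)`-index `k` of `λ` is
negative, and otherwise equals `ε(λ) · Δ(Y;X)/(Δ(X)Δ(Y)) · det M`. -/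
def LS {n m : ℕ} (lam : ℕ → ℕ) (X : Fin n → F) (Y : Fin m → F) : F :=
  if indexOf m n lam < 0 then 0
  else (LSsign m n (indexOf m n lam).toNat lam : F) * vanPair Y X /
    (vanDet X * vanDet Y) * (LSmat (indexOf m n lam).toNat lam X Y).det

/-- `walkMu lam n I` is the partition with `i`-th part `λ_{V_i} + n + i − V_i`,
where `V_1 < ⋯ < V_card(I)` is the increasing (1-based) enumeration of `I`. -/
def walkMu (lam : ℕ → ℕ) (n : ℕ) {N : ℕ} (I : Finset (Fin N)) : ℕ → ℕ :=
  pad fun i =>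
    if h : 1 ≤ i ∧ i ≤ I.card then
      lam (((I.orderIsoOfFin rfl ⟨i - 1, by omega⟩).1 : ℕ) + 1) +
        (n + i - (((I.orderIsoOfFin rfl ⟨i - 1, by omega⟩).1 : ℕ) + 1))
    else 0

/-- `C_N(K)`: the set `{N − j + 1 : j ∈ {1,…,N} ∖ K}`. -/
def Cfin (N : ℕ) (K : Finset ℕ) : Finset ℕ :=
  (Finset.Icc 1 N \ K).image (fun j => N + 1 - j)

/-- the subpartition `sub_N(λ, s)`: its `j`-th part is
`λ_{s_j} + (N − s_j) − (r − j)`, where `s_1 < ⋯ < s_r` are the elements of `s`. -/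
def subPartF (N : ℕ) (lam : ℕ → ℕ) (s : Finset ℕ) : ℕ → ℕ :=
  pad fun j =>
    if h : 1 ≤ j ∧ j ≤ s.card then
      lam ((s.orderIsoOfFin rfl ⟨j - 1, by omega⟩).1) +
        (N - (s.orderIsoOfFin rfl ⟨j - 1, by omega⟩).1) - (s.card - j)
    else 0

end

/-- `α` is a quasi-partition associated to the subset with membership
predicate `inV` (the complement being taken inside `{1, …, m+n}`). -/
def IsQuasiPartition (m n : ℕ) (inV : ℕ → Prop) (α : ℕ → ℤ) : Prop :=
  0 ≤ α (m + n) ∧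
  (∀ i, 1 < i → i < m + n → ¬(α (i - 1) < α i ∧ α i < α (i + 1))) ∧
  (∀ i, 1 ≤ i → i < m + n → ((inV i ↔ inV (i + 1)) → α (i + 1) ≤ α i)) ∧
  (∀ i, 1 ≤ i → i < m + n → (¬(inV i ↔ inV (i + 1)) → α (i + 1) ≤ α i + 1))

/-- the integer sequence `α_1, …, α_N` is a partition: non-increasing and
non-negative. -/
def IsPartitionSeqZ (N : ℕ) (α : ℕ → ℤ) : Prop :=
  (∀ i j, 1 ≤ i → i ≤ j → j ≤ N → α j ≤ α i) ∧ ∀ i, 1 ≤ i → i ≤ N → 0 ≤ α i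


namespace OverlapAux

open Finset Equiv Matrix

variable {F : Type*} [Field F]

lemma vanDet_eq_Ioi {N : ℕ} (Z : Fin N → F) :
    vanDet Z = ∏ i : Fin N, ∏ j ∈ Finset.Ioi i, (Z i - Z j) := by
  unfold vanDet
  refine Finset.prod_congr rfl fun i _ => ?_
  rw [← Finset.prod_filter]
  congr 1
  ext j
  simp

lemma vandermonde_comp {N : ℕ} (Z : Fin N → F) (σ : Equiv.Perm (Fin N)) :
    Matrix.vandermonde (fun i => Z (σ i)) = (Matrix.vandermonde Z).submatrix σ id := by
  ext i j
  simp [Matrix.vandermonde]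

lemma vanDet_comp {N : ℕ} (Z : Fin N → F) (σ : Equiv.Perm (Fin N)) :
    vanDet (fun i => Z (σ i)) = ((Equiv.Perm.sign σ : ℤ) : F) * vanDet Z := by
  have key : ∀ W : Fin N → F,
      vanDet W = (-1 : F) ^ (∑ i : Fin N, (Finset.Ioi i).card) * (Matrix.vandermonde W).det := by
    intro W
    rw [vanDet_eq_Ioi, Matrix.det_vandermonde]
    rw [← Finset.prod_pow_eq_pow_sum, ← Finset.prod_mul_distrib]
    refine Finset.prod_congr rfl fun i _ => ?_
    rw [← Finset.prod_const, ← Finset.prod_mul_distrib]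
    exact Finset.prod_congr rfl fun j _ => by ring
  rw [key, key Z, vandermonde_comp, Matrix.det_permute]
  push_cast
  ring

lemma prod_split {M : Type*} [CommMonoid M] {m n : ℕ} (g : Fin (m + n) → M) :
    ∏ i, g i = (∏ i : Fin m, g (Fin.castAdd n i)) * ∏ i : Fin n, g (Fin.natAdd m i) := by
  rw [← Equiv.prod_comp finSumFinEquiv g, Fintype.prod_sum_type]
  simp

lemma vanDet_split {m n : ℕ} (Z : Fin (m + n) → F) :
    vanDet Z = vanDet (fun i : Fin m => Z (Fin.castAdd n i)) *
      vanDet (fun i : Fin n => Z (Fin.natAdd m i)) *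
      vanPair (fun i : Fin m => Z (Fin.castAdd n i)) (fun i : Fin n => Z (Fin.natAdd m i)) := by
  unfold vanDet vanPair
  rw [prod_split (fun i => ∏ j, if i < j then Z i - Z j else 1)]
  have h1 : ∀ i : Fin m,
      (∏ j, if Fin.castAdd n i < j then Z (Fin.castAdd n i) - Z j else 1)
        = (∏ j : Fin m, if i < j then Z (Fin.castAdd n i) - Z (Fin.castAdd n j) else 1) *
          ∏ j : Fin n, (Z (Fin.castAdd n i) - Z (Fin.natAdd m j)) := by
    intro i
    rw [prod_split (fun j => if Fin.castAdd n i < j then Z (Fin.castAdd n i) - Z j else 1)]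
    refine congrArg₂ (· * ·) ?_ ?_
    · refine Finset.prod_congr rfl fun j _ => if_congr ?_ rfl rfl
      rw [Fin.lt_def, Fin.lt_def]
      simp
    · refine Finset.prod_congr rfl fun j _ => if_pos ?_
      have := i.2
      rw [Fin.lt_def]
      simp only [Fin.coe_castAdd, Fin.coe_natAdd]
      omega
  have h2 : ∀ i : Fin n,
      (∏ j, if Fin.natAdd m i < j then Z (Fin.natAdd m i) - Z j else 1)
        = ∏ j : Fin n, if i < j then Z (Fin.natAdd m i) - Z (Fin.natAdd m j) else 1 := by
    intro i
    rw [prod_split (fun j => if Fin.natAdd m i < j then Z (Fin.natAdd m i) - Z j else 1)]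
    have hz : (∏ j : Fin m, if Fin.natAdd m i < Fin.castAdd n j then
        Z (Fin.natAdd m i) - Z (Fin.castAdd n j) else 1) = 1 := by
      refine Finset.prod_eq_one fun j _ => if_neg ?_
      have := j.2
      rw [Fin.lt_def]
      simp only [Fin.coe_castAdd, Fin.coe_natAdd]
      omega
    rw [hz, one_mul]
    refine Finset.prod_congr rfl fun j _ => if_congr ?_ rfl rfl
    rw [Fin.lt_def, Fin.lt_def]
    simp only [Fin.coe_natAdd]
    omega
  simp only [h1, h2]
  rw [Finset.prod_mul_distrib]
  ring

lemma vanDet_pos {K : Type*} [Field K] [LinearOrder K] [IsStrictOrderedRing K] {N : ℕ} {Z : Fin N → K}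
    (hZ : ∀ i j : Fin N, i < j → Z j < Z i) : 0 < vanDet Z := by
  unfold vanDet
  refine Finset.prod_pos fun i _ => Finset.prod_pos fun j _ => ?_
  split_ifs with h
  · linarith [hZ i j h]
  · exact one_pos

lemma det_pow_comp {N : ℕ} (X : Fin N → F) (e : Fin N → ℕ) (σ : Equiv.Perm (Fin N)) :
    (Matrix.of fun i j : Fin N => X i ^ e (σ j)).det
      = ((Equiv.Perm.sign σ : ℤ) : F) * (Matrix.of fun i j : Fin N => X i ^ e j).det := by
  have h : (Matrix.of fun i j : Fin N => X i ^ e (σ j))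
      = (Matrix.of fun i j : Fin N => X i ^ e j).submatrix id σ := rfl
  rw [h, Matrix.det_permute']

variable {m n : ℕ}

noncomputable def splitEquiv (I : Finset (Fin (m + n))) (hI : I.card = m) (hIc : Iᶜ.card = n) :
    Fin m ⊕ Fin n ≃ Fin (m + n) :=
  (Equiv.sumCongr (I.orderIsoOfFin hI).toEquiv ((Iᶜ).orderIsoOfFin hIc).toEquiv).trans
    ((Equiv.sumCongr (Equiv.refl _)
        (Equiv.subtypeEquivRight (fun x => Finset.mem_compl))).trans
      (Equiv.sumCompl (· ∈ I)))

noncomputable def splitPerm (I : Finset (Fin (m + n))) (hI : I.card = m) (hIc : Iᶜ.card = n) :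
    Equiv.Perm (Fin (m + n)) :=
  finSumFinEquiv.symm.trans (splitEquiv I hI hIc)

lemma splitPerm_castAdd (I : Finset (Fin (m + n))) (hI : I.card = m) (hIc : Iᶜ.card = n)
    (i : Fin m) : splitPerm I hI hIc (Fin.castAdd n i) = ↑(I.orderIsoOfFin hI i) := by
  simp [splitPerm, splitEquiv, finSumFinEquiv_symm_apply_castAdd]

lemma splitPerm_natAdd (I : Finset (Fin (m + n))) (hI : I.card = m) (hIc : Iᶜ.card = n)
    (j : Fin n) : splitPerm I hI hIc (Fin.natAdd m j) = ↑((Iᶜ).orderIsoOfFin hIc j) := by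
  simp [splitPerm, splitEquiv, finSumFinEquiv_symm_apply_natAdd]

noncomputable def lapTerm (M : Matrix (Fin (m + n)) (Fin (m + n)) F) (I : Finset (Fin (m + n))) :
    F :=
  if h : I.card = m ∧ Iᶜ.card = n then
    ((Equiv.Perm.sign (splitPerm I h.1 h.2) : ℤ) : F) *
      (Matrix.of fun i j : Fin m => M ↑(I.orderIsoOfFin h.1 i) (Fin.castAdd n j)).det *
      (Matrix.of fun i j : Fin n => M ↑((Iᶜ).orderIsoOfFin h.2 i) (Fin.natAdd m j)).det
  else 0

lemma card_compl_eq (I : Finset (Fin (m + n))) (hI : I.card = m) : Iᶜ.card = n := by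
  rw [Finset.card_compl, Fintype.card_fin, hI]
  omega

theorem laplace (M : Matrix (Fin (m + n)) (Fin (m + n)) F) :
    M.det = ∑ I ∈ Finset.powersetCard m (Finset.univ : Finset (Fin (m + n))), lapTerm M I := by
  classical
  rw [Matrix.det_apply]
  set f : Equiv.Perm (Fin (m + n)) → F := fun σ => Equiv.Perm.sign σ • ∏ i, M (σ i) i with hf
  have hcastinj : Function.Injective (fun i : Fin m => Fin.castAdd n i) :=
    fun a b hab => Fin.ext (by simpa using congrArg Fin.val hab)
  have hinj : ∀ σ : Equiv.Perm (Fin (m + n)),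
      Function.Injective (fun i : Fin m => σ (Fin.castAdd n i)) :=
    fun σ a b hab => hcastinj (σ.injective hab)
  set Iof : Equiv.Perm (Fin (m + n)) → Finset (Fin (m + n)) :=
    fun σ => Finset.image (fun i : Fin m => σ (Fin.castAdd n i)) Finset.univ with hIof
  have hIofcard : ∀ σ, (Iof σ).card = m := by
    intro σ
    rw [hIof, Finset.card_image_of_injective _ (hinj σ)]
    simp
  rw [← Finset.sum_fiberwise_of_maps_to
    (g := Iof) (fun σ _ => Finset.mem_powersetCard_univ.2 (hIofcard σ)) f]
  refine Finset.sum_congr rfl fun I hI => ?_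
  have hIm : I.card = m := Finset.mem_powersetCard_univ.1 hI
  have hIcn : Iᶜ.card = n := card_compl_eq I hIm
  rw [lapTerm, dif_pos ⟨hIm, hIcn⟩]
  set sp := splitPerm I hIm hIcn with hsp
  set bld : Equiv.Perm (Fin m) × Equiv.Perm (Fin n) → Equiv.Perm (Fin (m + n)) :=
    fun τ => (finSumFinEquiv.symm.trans ((Equiv.sumCongr τ.1 τ.2).trans finSumFinEquiv)).trans sp
    with hbld
  have hbldc : ∀ τ (i : Fin m), bld τ (Fin.castAdd n i) = ↑(I.orderIsoOfFin hIm (τ.1 i)) := by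
    intro τ i
    show sp (finSumFinEquiv (Equiv.sumCongr τ.1 τ.2 (finSumFinEquiv.symm (Fin.castAdd n i))))
      = _
    rw [finSumFinEquiv_symm_apply_castAdd]
    simp only [Equiv.sumCongr_apply, Sum.map_inl, finSumFinEquiv_apply_left]
    rw [hsp, splitPerm_castAdd]
  have hbldn : ∀ τ (j : Fin n), bld τ (Fin.natAdd m j) = ↑((Iᶜ).orderIsoOfFin hIcn (τ.2 j)) := by
    intro τ j
    show sp (finSumFinEquiv (Equiv.sumCongr τ.1 τ.2 (finSumFinEquiv.symm (Fin.natAdd m j)))) = _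
    rw [finSumFinEquiv_symm_apply_natAdd]
    simp only [Equiv.sumCongr_apply, Sum.map_inr, finSumFinEquiv_apply_right]
    rw [hsp, splitPerm_natAdd]
  have hmemI : ∀ σ, σ ∈ Finset.univ.filter (fun σ => Iof σ = I) →
      ∀ i : Fin m, σ (Fin.castAdd n i) ∈ I := by
    intro σ hσ i
    have := (Finset.mem_filter.1 hσ).2
    rw [← this]
    exact Finset.mem_image_of_mem _ (Finset.mem_univ i)
  have hmemIc : ∀ σ, σ ∈ Finset.univ.filter (fun σ => Iof σ = I) →
      ∀ j : Fin n, σ (Fin.natAdd m j) ∈ Iᶜ := by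
    intro σ hσ j
    have h2 := (Finset.mem_filter.1 hσ).2
    rw [Finset.mem_compl, ← h2, hIof]
    intro hmem
    simp only [Finset.mem_image, Finset.mem_univ, true_and] at hmem
    obtain ⟨i, hi⟩ := hmem
    have := σ.injective hi
    have h3 := congrArg Fin.val this
    simp only [Fin.coe_castAdd, Fin.coe_natAdd] at h3
    omega
  -- the bijection
  have key : ∑ τ : Equiv.Perm (Fin m) × Equiv.Perm (Fin n), f (bld τ)
      = ∑ σ ∈ Finset.univ.filter (fun σ => Iof σ = I), f σ := by
    refine Finset.sum_bij' (i := fun τ _ => bld τ)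
      (j := fun σ hσ =>
        (Equiv.ofBijective
          (fun i : Fin m => (I.orderIsoOfFin hIm).symm ⟨σ (Fin.castAdd n i), hmemI σ hσ i⟩)
          (Finite.injective_iff_bijective.mp (fun a b hab => by
            have h1 := congrArg (fun x => ((I.orderIsoOfFin hIm) x : Fin (m + n))) hab
            simp only [OrderIso.apply_symm_apply] at h1
            exact hcastinj (σ.injective h1))),
         Equiv.ofBijective
          (fun j : Fin n => ((Iᶜ).orderIsoOfFin hIcn).symm ⟨σ (Fin.natAdd m j), hmemIc σ hσ j⟩)
          (Finite.injective_iff_bijective.mp (fun a b hab => by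
            have h1 := congrArg (fun x => (((Iᶜ).orderIsoOfFin hIcn) x : Fin (m + n))) hab
            simp only [OrderIso.apply_symm_apply] at h1
            have h2 := σ.injective h1
            have h3 := congrArg Fin.val h2
            simp only [Fin.coe_natAdd] at h3
            exact Fin.ext (by omega)))))
      ?_ ?_ ?_ ?_ ?_
    · -- bld τ lands in the fiber
      intro τ _
      rw [Finset.mem_filter]
      refine ⟨Finset.mem_univ _, ?_⟩
      rw [hIof]
      apply Finset.eq_of_subset_of_card_le
      · intro x hx
        simp only [Finset.mem_image, Finset.mem_univ, true_and] at hx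
        obtain ⟨i, rfl⟩ := hx
        rw [hbldc]
        exact (I.orderIsoOfFin hIm _).2
      · rw [hIm, Finset.card_image_of_injective _ (hinj (bld τ))]
        simp
    · intro σ hσ
      exact Finset.mem_univ _
    · -- left inverse : recov (bld τ) = τ
      intro τ _
      refine Prod.ext ?_ ?_
      · ext i
        simp only [Equiv.ofBijective_apply]
        have h4 : (⟨bld τ (Fin.castAdd n i), by
            rw [hbldc]; exact (I.orderIsoOfFin hIm _).2⟩ : {x // x ∈ I})
            = I.orderIsoOfFin hIm (τ.1 i) := Subtype.ext (hbldc τ i)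
        rw [h4]
        simp
      · ext j
        simp only [Equiv.ofBijective_apply]
        have h4 : (⟨bld τ (Fin.natAdd m j), by
            rw [hbldn]; exact ((Iᶜ).orderIsoOfFin hIcn _).2⟩ : {x // x ∈ Iᶜ})
            = (Iᶜ).orderIsoOfFin hIcn (τ.2 j) := Subtype.ext (hbldn τ j)
        rw [h4]
        simp
    · -- right inverse : bld (recov σ hσ) = σ
      intro σ hσ
      ext x
      obtain ⟨s, rfl⟩ := finSumFinEquiv.surjective x
      cases s with
      | inl i =>
        rw [finSumFinEquiv_apply_left, hbldc]
        simp [Equiv.ofBijective_apply]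
      | inr j =>
        rw [finSumFinEquiv_apply_right, hbldn]
        simp [Equiv.ofBijective_apply]
    · intro τ _
      rfl
  rw [← key]
  have hsign : ∀ τ : Equiv.Perm (Fin m) × Equiv.Perm (Fin n),
      Equiv.Perm.sign (bld τ)
        = Equiv.Perm.sign sp * (Equiv.Perm.sign τ.1 * Equiv.Perm.sign τ.2) := by
    intro τ
    have h1 : bld τ
        = sp * (finSumFinEquiv.symm.trans ((Equiv.sumCongr τ.1 τ.2).trans finSumFinEquiv)) := rfl
    rw [h1, Equiv.Perm.sign_mul]
    congr 1
    have h2 : (finSumFinEquiv.symm.trans ((Equiv.sumCongr τ.1 τ.2).trans finSumFinEquiv))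
        = finSumFinEquiv.permCongr (Equiv.sumCongr τ.1 τ.2) := by
      ext x
      simp [Equiv.permCongr_apply]
    rw [h2, Equiv.Perm.sign_permCongr, Equiv.Perm.sign_sumCongr]
  have hprod : ∀ τ : Equiv.Perm (Fin m) × Equiv.Perm (Fin n), (∏ i, M (bld τ i) i)
      = (∏ i : Fin m, M ↑(I.orderIsoOfFin hIm (τ.1 i)) (Fin.castAdd n i)) *
        ∏ j : Fin n, M ↑((Iᶜ).orderIsoOfFin hIcn (τ.2 j)) (Fin.natAdd m j) := by
    intro τ
    rw [prod_split (fun i => M (bld τ i) i)]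
    refine congrArg₂ (· * ·) ?_ ?_
    · exact Finset.prod_congr rfl fun i _ => by rw [hbldc]
    · exact Finset.prod_congr rfl fun j _ => by rw [hbldn]
  rw [Matrix.det_apply, Matrix.det_apply]
  rw [mul_assoc, Finset.sum_mul_sum, Finset.mul_sum]
  rw [Fintype.sum_prod_type]
  refine Finset.sum_congr rfl fun τ1 _ => ?_
  rw [Finset.mul_sum]
  refine Finset.sum_congr rfl fun τ2 _ => ?_
  show f (bld (τ1, τ2)) = _
  rw [hf]
  simp only
  rw [hsign (τ1, τ2), hprod (τ1, τ2)]
  simp only [Units.smul_def, zsmul_eq_mul, Matrix.of_apply]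
  push_cast
  ring

lemma schur_comp_cast {k k' : ℕ} (h : k = k') (lam : ℕ → ℕ) (S : Fin k' → F) :
    schur lam (S ∘ Fin.cast h) = schur lam S := by
  subst h
  rfl

lemma vanPair_comp_cast {k k' l l' : ℕ} (h : k = k') (h' : l = l')
    (S : Fin k' → F) (T : Fin l' → F) :
    vanPair (S ∘ Fin.cast h) (T ∘ Fin.cast h') = vanPair S T := by
  subst h
  subst h'
  rfl

lemma subSeq_eq {N : ℕ} (X : Fin N → F) (I : Finset (Fin N)) {k : ℕ} (h : I.card = k) :
    subSeq X I = (fun i : Fin k => X ↑(I.orderIsoOfFin h i)) ∘ Fin.cast h := by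
  funext j
  simp only [subSeq, Function.comp_apply, Finset.coe_orderIsoOfFin_apply,
    Finset.orderEmbOfFin_apply]
  rfl

/-- hook exponent sequence. -/
abbrev hookA (mu : ℕ → ℕ) (m : ℕ) : Fin m → ℕ := fun i => mu (i.1 + 1) + m - (i.1 + 1)

/-- the concatenated exponents. -/
abbrev expC (mu nu : ℕ → ℕ) (m n : ℕ) : Fin (m + n) → ℕ :=
  fun j => Sum.elim (hookA mu m) (hookA nu n) (finSumFinEquiv.symm j)

lemma val_univ_fin (N : ℕ) : (Finset.univ.val : Multiset (Fin N)).map Fin.val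
    = Multiset.range N := by
  have h1 : (Finset.univ.val : Multiset (Fin N)).map Fin.val
      = ((Finset.univ : Finset (Fin N)).map Fin.valEmbedding).val := rfl
  rw [h1, Fin.map_valEmbedding_univ]
  have : (Finset.Iio N) = Finset.range N := by rw [Nat.Iio_eq_range]
  rw [this, Finset.range_val]

lemma hooks_eq_map (N : ℕ) (f : ℕ → ℕ) :
    hooks N f = Multiset.map (fun i : Fin N => f (i.1 + 1) + N - (i.1 + 1)) Finset.univ.val := by
  unfold hooks
  rw [← val_univ_fin N, Multiset.map_map]
  rfl

lemma expC_map_eq (mu nu : ℕ → ℕ) :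
    Multiset.map (expC mu nu m n) Finset.univ.val = hooks m mu + hooks n nu := by
  have h0 : Multiset.map (⇑finSumFinEquiv.symm) Finset.univ.val
      = (Finset.univ : Finset (Fin m ⊕ Fin n)).val := by
    have h1 := Finset.map_univ_equiv (finSumFinEquiv (m := m) (n := n)).symm
    have h2 := congrArg Finset.val h1
    exact h2
  have h3 : Multiset.map (expC mu nu m n) Finset.univ.val
      = Multiset.map (Sum.elim (hookA mu m) (hookA nu n))
          (Multiset.map (⇑finSumFinEquiv.symm) Finset.univ.val) := by
    rw [Multiset.map_map]
    rfl
  rw [h3, h0, ← Finset.univ_disjSum_univ, Finset.val_disjSum, Multiset.disjSum,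
    Multiset.map_add, Multiset.map_map, Multiset.map_map]
  rw [hooks_eq_map m mu, hooks_eq_map n nu]
  rfl

lemma exists_perm_comp {N : ℕ} {f g : Fin N → ℕ} (hf : Function.Injective f)
    (h : Multiset.map f Finset.univ.val = Multiset.map g Finset.univ.val) :
    ∃ p : Equiv.Perm (Fin N), ∀ j, f (p j) = g j := by
  have hrange : ∀ j, ∃ z, f z = g j := by
    intro j
    have hmem : g j ∈ Multiset.map g Finset.univ.val :=
      Multiset.mem_map_of_mem _ (Finset.mem_univ j)
    rw [← h] at hmem
    obtain ⟨z, _, hz⟩ := Multiset.mem_map.mp hmem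
    exact ⟨z, hz⟩
  choose φ hφ using hrange
  have hg : Function.Injective g := by
    have hnd : (Multiset.map g Finset.univ.val).Nodup := by
      rw [← h]
      exact Multiset.Nodup.map hf Finset.univ.nodup
    intro a b hab
    exact Multiset.inj_on_of_nodup_map hnd a (Finset.mem_univ a) b (Finset.mem_univ b) hab
  have hφinj : Function.Injective φ := fun a b hab => hg (by rw [← hφ a, ← hφ b, hab])
  exact ⟨Equiv.ofBijective φ (Finite.injective_iff_bijective.mp hφinj), hφ⟩

lemma sign_merge {m n : ℕ} (a : Fin m → ℕ) (b : Fin n → ℕ) (c : Fin (m + n) → ℕ)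
    (ha : ∀ i j : Fin m, i < j → a j < a i) (hb : ∀ i j : Fin n, i < j → b j < b i)
    (hc : ∀ i j : Fin (m + n), i < j → c j < c i)
    (p : Equiv.Perm (Fin (m + n)))
    (hp : ∀ j, c (p j) = Sum.elim a b (finSumFinEquiv.symm j)) :
    ((Equiv.Perm.sign p : ℤ)) = (-1) ^ ((Finset.univ ×ˢ Finset.univ).filter
        (fun q : Fin m × Fin n => a q.1 < b q.2)).card := by
  set k := ((Finset.univ ×ˢ Finset.univ).filter
      (fun q : Fin m × Fin n => a q.1 < b q.2)).card with hk
  set A : Fin m → ℚ := fun i => (a i : ℚ) with hA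
  set B : Fin n → ℚ := fun j => (b j : ℚ) with hB
  set C : Fin (m + n) → ℚ := fun i => (c i : ℚ) with hC
  set E : Fin (m + n) → ℚ := fun j => ((Sum.elim a b (finSumFinEquiv.symm j) : ℕ) : ℚ) with hE
  have h1 : vanDet (fun j => C (p j)) = ((Equiv.Perm.sign p : ℤ) : ℚ) * vanDet C :=
    vanDet_comp C p
  have h2 : (fun j => C (p j)) = E := by
    funext j
    show ((c (p j) : ℕ) : ℚ) = _
    rw [hp j]
  have h3 := vanDet_split E
  have hEc : (fun i : Fin m => E (Fin.castAdd n i)) = A := by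
    funext i
    show ((Sum.elim a b (finSumFinEquiv.symm (Fin.castAdd n i)) : ℕ) : ℚ) = _
    rw [finSumFinEquiv_symm_apply_castAdd]
    rfl
  have hEn : (fun j : Fin n => E (Fin.natAdd m j)) = B := by
    funext j
    show ((Sum.elim a b (finSumFinEquiv.symm (Fin.natAdd m j)) : ℕ) : ℚ) = _
    rw [finSumFinEquiv_symm_apply_natAdd]
    rfl
  rw [hEc, hEn] at h3
  rw [h2] at h1
  have hVC : 0 < vanDet C := vanDet_pos (fun i j hij => by
    show (c j : ℚ) < (c i : ℚ)
    exact_mod_cast hc i j hij)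
  have hVA : 0 < vanDet A := vanDet_pos (fun i j hij => by
    show (a j : ℚ) < (a i : ℚ)
    exact_mod_cast ha i j hij)
  have hVB : 0 < vanDet B := vanDet_pos (fun i j hij => by
    show (b j : ℚ) < (b i : ℚ)
    exact_mod_cast hb i j hij)
  have hfac : ∀ (i : Fin m) (j : Fin n), A i - B j
      = (if a i < b j then (-1 : ℚ) else 1) * |A i - B j| := by
    intro i j
    rcases lt_trichotomy (a i) (b j) with hlt | heq | hgt
    · rw [if_pos hlt, abs_of_neg (by
        show (a i : ℚ) - (b j : ℚ) < 0
        have : (a i : ℚ) < (b j : ℚ) := by exact_mod_cast hlt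
        linarith)]
      ring
    · have hz : A i - B j = 0 := by
        show (a i : ℚ) - (b j : ℚ) = 0
        rw [heq]
        ring
      rw [hz, abs_zero, mul_zero]
    · rw [if_neg (by omega), abs_of_pos (by
        show 0 < (a i : ℚ) - (b j : ℚ)
        have : (b j : ℚ) < (a i : ℚ) := by exact_mod_cast hgt
        linarith)]
      ring
  have h4 : vanPair A B = (-1 : ℚ) ^ k * ∏ i : Fin m, ∏ j : Fin n, |A i - B j| := by
    unfold vanPair
    calc ∏ i : Fin m, ∏ j : Fin n, (A i - B j)
        = ∏ i : Fin m, ∏ j : Fin n,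
            ((if a i < b j then (-1 : ℚ) else 1) * |A i - B j|) :=
          Finset.prod_congr rfl fun i _ => Finset.prod_congr rfl fun j _ => hfac i j
      _ = (∏ i : Fin m, ∏ j : Fin n, (if a i < b j then (-1 : ℚ) else 1)) *
            ∏ i : Fin m, ∏ j : Fin n, |A i - B j| := by
          rw [← Finset.prod_mul_distrib]
          exact Finset.prod_congr rfl fun i _ => Finset.prod_mul_distrib
      _ = (-1 : ℚ) ^ k * ∏ i : Fin m, ∏ j : Fin n, |A i - B j| := by
          congr 1
          rw [← Finset.prod_product']
          rw [← Finset.prod_filter, Finset.prod_const, hk]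
  have heq : ((Equiv.Perm.sign p : ℤ) : ℚ) * vanDet C
      = vanDet A * vanDet B * ((-1 : ℚ) ^ k * ∏ i : Fin m, ∏ j : Fin n, |A i - B j|) := by
    rw [← h4, ← h3, ← h1]
  set Q := ∏ i : Fin m, ∏ j : Fin n, |A i - B j| with hQ
  have hQ0 : 0 ≤ Q :=
    Finset.prod_nonneg fun i _ => Finset.prod_nonneg fun j _ => abs_nonneg _
  rcases Int.units_eq_one_or (Equiv.Perm.sign p) with hs | hs <;>
    rcases Nat.even_or_odd k with hpar | hpar
  · rw [hs, hpar.neg_one_pow]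
    norm_num
  · exfalso
    rw [hs, hpar.neg_one_pow] at heq
    push_cast at heq
    nlinarith [mul_nonneg (mul_pos hVA hVB).le hQ0]
  · exfalso
    rw [hs, hpar.neg_one_pow] at heq
    push_cast at heq
    nlinarith [mul_nonneg (mul_pos hVA hVB).le hQ0]
  · rw [hs, hpar.neg_one_pow]
    norm_num

lemma overlapSign_eq (m n : ℕ) (mu nu : ℕ → ℕ) :
    overlapSign m n mu nu = (-1 : ℤ) ^ ((Finset.univ ×ˢ Finset.univ).filter
      (fun q : Fin m × Fin n => hookA mu m q.1 < hookA nu n q.2)).card := by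
  unfold overlapSign
  congr 1
  symm
  refine Finset.card_bij (fun a _ => ((a.1 : ℕ), (a.2 : ℕ))) ?_ ?_ ?_
  · intro q hq
    simp only [Finset.mem_filter, Finset.mem_product, Finset.mem_univ, true_and] at hq
    simp only [Finset.mem_filter, Finset.mem_product, Finset.mem_range]
    exact ⟨⟨q.1.2, q.2.2⟩, hq⟩
  · intro q hq q' hq' hqq
    have h1 := congrArg Prod.fst hqq
    have h2 := congrArg Prod.snd hqq
    simp only at h1 h2
    exact Prod.ext (Fin.ext h1) (Fin.ext h2)
  · intro q hq
    simp only [Finset.mem_filter, Finset.mem_product, Finset.mem_range] at hq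
    exact ⟨(⟨q.1, hq.1.1⟩, ⟨q.2, hq.1.2⟩), by
      simp only [Finset.mem_filter, Finset.mem_product, Finset.mem_univ, true_and]
      exact hq.2, rfl⟩

lemma sum_term_eq (X : Fin (m + n) → F) (mu nu : ℕ → ℕ)
    (hmul : LenLE mu m) (hnul : LenLE nu n) :
    ∑ I ∈ Finset.powersetCard m (Finset.univ : Finset (Fin (m + n))),
        schur mu (subSeq X I) * schur nu (subSeq X Iᶜ) / vanPair (subSeq X I) (subSeq X Iᶜ)
      = (Matrix.of fun i j : Fin (m + n) => X i ^ expC mu nu m n j).det / vanDet X := by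
  rw [laplace (Matrix.of fun i j : Fin (m + n) => X i ^ expC mu nu m n j), Finset.sum_div]
  refine Finset.sum_congr rfl fun I hI => ?_
  have hIm : I.card = m := Finset.mem_powersetCard_univ.1 hI
  have hIcn : Iᶜ.card = n := card_compl_eq I hIm
  rw [subSeq_eq X I hIm, subSeq_eq X Iᶜ hIcn, schur_comp_cast, schur_comp_cast,
    vanPair_comp_cast]
  rw [lapTerm, dif_pos ⟨hIm, hIcn⟩]
  set S : Fin m → F := fun i => X ↑(I.orderIsoOfFin hIm i) with hS
  set T : Fin n → F := fun j => X ↑((Iᶜ).orderIsoOfFin hIcn j) with hT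
  rw [schur, if_pos hmul, schur, if_pos hnul]
  have hAeq : (Matrix.of fun i j : Fin m =>
        (Matrix.of fun i j : Fin (m + n) => X i ^ expC mu nu m n j)
          ↑(I.orderIsoOfFin hIm i) (Fin.castAdd n j))
      = Matrix.of (fun i j : Fin m => S i ^ (mu ((j : ℕ) + 1) + m - ((j : ℕ) + 1))) := by
    ext i j
    simp only [Matrix.of_apply, expC, finSumFinEquiv_symm_apply_castAdd, Sum.elim_inl, hS,
      hookA]
  have hBeq : (Matrix.of fun i j : Fin n =>
        (Matrix.of fun i j : Fin (m + n) => X i ^ expC mu nu m n j)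
          ↑((Iᶜ).orderIsoOfFin hIcn i) (Fin.natAdd m j))
      = Matrix.of (fun i j : Fin n => T i ^ (nu ((j : ℕ) + 1) + n - ((j : ℕ) + 1))) := by
    ext i j
    simp only [Matrix.of_apply, expC, finSumFinEquiv_symm_apply_natAdd, Sum.elim_inr, hT,
      hookA]
  rw [hAeq, hBeq]
  have hden : vanDet S * vanDet T * vanPair S T
      = ((Equiv.Perm.sign (splitPerm I hIm hIcn) : ℤ) : F) * vanDet X := by
    have h1 := vanDet_comp X (splitPerm I hIm hIcn)
    have h2 := vanDet_split (fun i => X (splitPerm I hIm hIcn i))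
    have hc : (fun i : Fin m => X (splitPerm I hIm hIcn (Fin.castAdd n i))) = S := by
      funext i
      rw [splitPerm_castAdd]
    have hn : (fun j : Fin n => X (splitPerm I hIm hIcn (Fin.natAdd m j))) = T := by
      funext j
      rw [splitPerm_natAdd]
    rw [hc, hn] at h2
    rw [← h2, h1]
  have hs2 : ((Equiv.Perm.sign (splitPerm I hIm hIcn) : ℤ) : F) *
      ((Equiv.Perm.sign (splitPerm I hIm hIcn) : ℤ) : F) = 1 := by
    rcases Int.units_eq_one_or (Equiv.Perm.sign (splitPerm I hIm hIcn)) with h | h <;>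
      rw [h] <;> norm_num
  have hsinv : (((Equiv.Perm.sign (splitPerm I hIm hIcn) : ℤ) : F))⁻¹
      = ((Equiv.Perm.sign (splitPerm I hIm hIcn) : ℤ) : F) :=
    inv_eq_of_mul_eq_one_right hs2
  rw [div_mul_div_comm, div_div, hden, div_eq_mul_inv, mul_inv, hsinv, div_eq_mul_inv]
  ring

end OverlapAux

/-- **First overlap identity for Schur functions** (Dehaye): when the overlap
exists it indexes the left-hand side; when it is `∞` the left-hand side is `0`
and the sign is `1`. -/
theorem first_overlap_identity_schur
    {F : Type*} [Field F] {m n : ℕ} (X : Fin (m + n) → F)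
    (hXinj : Function.Injective X)
    (mu nu : ℕ → ℕ) (hmu : IsPartition mu) (hnu : IsPartition nu)
    (hmul : LenLE mu m) (hnul : LenLE nu n) :
    (∀ w : ℕ → ℕ, IsPartition w → IsOverlap m n mu nu w →
      schur w X =
        ∑ I ∈ Finset.powersetCard m (Finset.univ : Finset (Fin (m + n))),
          (overlapSign m n mu nu : F) * schur mu (subSeq X I) * schur nu (subSeq X Iᶜ) /
            vanPair (subSeq X I) (subSeq X Iᶜ)) ∧
    (OverlapInfinite m n mu nu →
      0 = ∑ I ∈ Finset.powersetCard m (Finset.univ : Finset (Fin (m + n))),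
            schur mu (subSeq X I) * schur nu (subSeq X Iᶜ) /
              vanPair (subSeq X I) (subSeq X Iᶜ)) := by
  classical
  constructor
  · intro w hw hov
    obtain ⟨hlen, hmult⟩ := hov
    have hewanti : ∀ i j : Fin (m + n), i < j →
        ((fun i : Fin (m + n) => w (i.1 + 1) + (m + n) - (i.1 + 1)) j)
          < ((fun i : Fin (m + n) => w (i.1 + 1) + (m + n) - (i.1 + 1)) i) := by
      intro i j hij
      have h1 := hw.2.1 (i.1 + 1) (j.1 + 1) (Nat.succ_le_succ (le_of_lt hij))
      have h2 := j.2
      have h3 : i.1 < j.1 := hij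
      simp only
      omega
    have hewinj : Function.Injective
        (fun i : Fin (m + n) => w (i.1 + 1) + (m + n) - (i.1 + 1)) := by
      intro i j h
      rcases lt_trichotomy i j with hlt | he | hgt
      · have := hewanti i j hlt
        simp only at h this
        omega
      · exact he
      · have := hewanti j i hgt
        simp only at h this
        omega
    have hmap : Multiset.map (fun i : Fin (m + n) => w (i.1 + 1) + (m + n) - (i.1 + 1))
          Finset.univ.val
        = Multiset.map (OverlapAux.expC mu nu m n) Finset.univ.val := by
      rw [← OverlapAux.hooks_eq_map (m + n) w, hmult, ← OverlapAux.expC_map_eq mu nu]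
    obtain ⟨p, hp⟩ := OverlapAux.exists_perm_comp hewinj hmap
    have hAanti : ∀ i j : Fin m, i < j →
        OverlapAux.hookA mu m j < OverlapAux.hookA mu m i := by
      intro i j hij
      have h1 := hmu.2.1 (i.1 + 1) (j.1 + 1) (Nat.succ_le_succ (le_of_lt hij))
      have h2 := j.2
      have h3 : i.1 < j.1 := hij
      simp only [OverlapAux.hookA]
      omega
    have hBanti : ∀ i j : Fin n, i < j →
        OverlapAux.hookA nu n j < OverlapAux.hookA nu n i := by
      intro i j hij
      have h1 := hnu.2.1 (i.1 + 1) (j.1 + 1) (Nat.succ_le_succ (le_of_lt hij))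
      have h2 := j.2
      have h3 : i.1 < j.1 := hij
      simp only [OverlapAux.hookA]
      omega
    have hsgn : ((Equiv.Perm.sign p : ℤ)) = overlapSign m n mu nu := by
      rw [OverlapAux.overlapSign_eq]
      exact OverlapAux.sign_merge (OverlapAux.hookA mu m) (OverlapAux.hookA nu n)
        (fun i : Fin (m + n) => w (i.1 + 1) + (m + n) - (i.1 + 1))
        hAanti hBanti hewanti p hp
    rw [schur, if_pos hlen]
    have hfac : ∀ I ∈ Finset.powersetCard m (Finset.univ : Finset (Fin (m + n))),
        (overlapSign m n mu nu : F) * schur mu (subSeq X I) * schur nu (subSeq X Iᶜ) /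
            vanPair (subSeq X I) (subSeq X Iᶜ)
          = (overlapSign m n mu nu : F) * (schur mu (subSeq X I) * schur nu (subSeq X Iᶜ) /
            vanPair (subSeq X I) (subSeq X Iᶜ)) := fun I _ => by ring
    rw [Finset.sum_congr rfl hfac, ← Finset.mul_sum,
      OverlapAux.sum_term_eq X mu nu hmul hnul]
    have hdets : (Matrix.of fun i j : Fin (m + n) => X i ^ OverlapAux.expC mu nu m n j).det
        = (overlapSign m n mu nu : F) *
          (Matrix.of fun i j : Fin (m + n) =>
            X i ^ (w ((j : ℕ) + 1) + (m + n) - ((j : ℕ) + 1))).det := by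
      have h5 : (Matrix.of fun i j : Fin (m + n) => X i ^ OverlapAux.expC mu nu m n j)
          = Matrix.of fun i j : Fin (m + n) =>
              X i ^ ((fun i : Fin (m + n) => w (i.1 + 1) + (m + n) - (i.1 + 1)) (p j)) := by
        ext i j
        simp only [Matrix.of_apply]
        rw [← hp j]
      rw [h5, OverlapAux.det_pow_comp X
        (fun i : Fin (m + n) => w (i.1 + 1) + (m + n) - (i.1 + 1)) p]
      have hcast : ((Equiv.Perm.sign p : ℤ) : F) = (overlapSign m n mu nu : F) := by
        exact_mod_cast congrArg (fun z : ℤ => (z : F)) hsgn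
      rw [hcast]
    rw [hdets]
    have hε2 : (overlapSign m n mu nu : F) * (overlapSign m n mu nu : F) = 1 := by
      unfold overlapSign
      push_cast
      rw [← pow_add, ← two_mul, pow_mul]
      norm_num
    have h7 : ∀ e d v : F, e * e = 1 → e * (e * d / v) = d / v := fun e d v h => by
      rw [show e * (e * d / v) = (e * e) * (d / v) from by ring, h, one_mul]
    exact (h7 _ _ _ hε2).symm
  · intro hinf
    obtain ⟨x, hx1, hx2⟩ := hinf
    rw [OverlapAux.sum_term_eq X mu nu hmul hnul]
    unfold hooks at hx1 hx2
    obtain ⟨i0, hi0, hix⟩ := Multiset.mem_map.1 hx1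
    obtain ⟨j0, hj0, hjx⟩ := Multiset.mem_map.1 hx2
    rw [Multiset.mem_range] at hi0 hj0
    have hdz : (Matrix.of fun i j : Fin (m + n) => X i ^ OverlapAux.expC mu nu m n j).det
        = 0 := by
      apply Matrix.det_zero_of_column_eq
        (i := finSumFinEquiv (Sum.inl (⟨i0, hi0⟩ : Fin m)))
        (j := finSumFinEquiv (Sum.inr (⟨j0, hj0⟩ : Fin n)))
      · intro hcontra
        have := finSumFinEquiv.injective hcontra
        simp at this
      · intro k
        simp only [Matrix.of_apply, OverlapAux.expC, Equiv.symm_apply_apply, Sum.elim_inl,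
          Sum.elim_inr, OverlapAux.hookA]
        rw [hix, hjx]
    rw [hdz, zero_div]
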